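/- Under the hypotheses of the main representation theorem (φ : B_b → ℝ increasing, convex, dominated by Σ_n φ_n(g_n) whenever f ≤ ⊕g, with each φ_n satisfying the tightness condition), for every f ∈ C_b and every sequence (f_j) in C_b with f_j ↓ 0 pointwise, one has φ(f + f_j) ↓ φ(f), i.e. φ is continuous from above at every bounded continuous function along decreasing continuous perturbations. -/

import Mathlib

set_option autoImplicit false

open MeasureTheory Filter Topology

variable {X : ℕ → Type*} [∀ n, MetricSpace (X n)]
  [∀ n, MeasurableSpace (X n)] [∀ n, BorelSpace (X n)]
  [MeasurableSpace (∀ n, X n)] [BorelSpace (∀ n, X n)]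

/-- Bounded continuous real functions on the product. -/
def Cb (f : (∀ n, X n) → ℝ) : Prop := Continuous f ∧ ∃ c, ∀ x, |f x| ≤ c

/-- Bounded upper semicontinuous real functions on the product. -/
def Ub (f : (∀ n, X n) → ℝ) : Prop := UpperSemicontinuous f ∧ ∃ c, ∀ x, |f x| ≤ c

/-- Bounded Borel measurable real functions on the product. -/
def Bb (f : (∀ n, X n) → ℝ) : Prop := Measurable f ∧ ∃ c, ∀ x, |f x| ≤ c

/-- Bounded nonnegative Borel measurable functions on the `n`-th factor. -/
def Bbn {n : ℕ} (g : X n → ℝ) : Prop :=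
  Measurable g ∧ (∀ x, 0 ≤ g x) ∧ ∃ c, ∀ x, g x ≤ c

/-- The convex conjugate `φ*_{C_b}(μ) = sup_{g ∈ C_b} (∫ g dμ - φ(g))`, valued in `EReal`. -/
noncomputable def conjCb (φ : ((∀ n, X n) → ℝ) → ℝ) (μ : Measure (∀ n, X n)) : EReal :=
  ⨆ g : {g : (∀ n, X n) → ℝ // Cb g}, (((∫ x, g.1 x ∂μ) - φ g.1 : ℝ) : EReal)

/-- The convex conjugate over bounded upper semicontinuous functions. -/
noncomputable def conjUb (φ : ((∀ n, X n) → ℝ) → ℝ) (μ : Measure (∀ n, X n)) : EReal :=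
  ⨆ g : {g : (∀ n, X n) → ℝ // Ub g}, (((∫ x, g.1 x ∂μ) - φ g.1 : ℝ) : EReal)

private lemma Bb.add' {f g : (∀ n, X n) → ℝ} (hf : Bb f) (hg : Bb g) :
    Bb (fun x => f x + g x) := by
  obtain ⟨hfm, cf, hcf⟩ := hf
  obtain ⟨hgm, cg, hcg⟩ := hg
  exact ⟨hfm.add hgm, cf + cg, fun x => (abs_add_le _ _).trans (add_le_add (hcf x) (hcg x))⟩

private lemma Bb.const_mul' {f : (∀ n, X n) → ℝ} (hf : Bb f) (c : ℝ) :
    Bb (fun x => c * f x) := by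
  obtain ⟨hfm, cf, hcf⟩ := hf
  refine ⟨hfm.const_mul c, |c| * cf, fun x => ?_⟩
  rw [abs_mul]
  exact mul_le_mul_of_nonneg_left (hcf x) (abs_nonneg c)

private lemma Bb.add_const' {f : (∀ n, X n) → ℝ} (hf : Bb f) (c : ℝ) :
    Bb (fun x => f x + c) := by
  obtain ⟨hfm, cf, hcf⟩ := hf
  exact ⟨hfm.add_const c, cf + |c|, fun x => (abs_add_le _ _).trans (add_le_add (hcf x) le_rfl)⟩

/-- Dini-type lemma: a decreasing sequence of continuous functions tending to `0`
pointwise is eventually uniformly small on a compact set. -/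
private lemma dini_aux {K : Set (∀ n, X n)} (hK : IsCompact K)
    (fj : ℕ → (∀ n, X n) → ℝ) (hcont : ∀ j, Continuous (fj j))
    (hanti : ∀ x, Antitone fun j => fj j x)
    (hlim : ∀ x, Tendsto (fun j => fj j x) atTop (𝓝 0)) {δ : ℝ} (hδ : 0 < δ) :
    ∃ j₀, ∀ x ∈ K, fj j₀ x < δ := by
  have hex : ∀ x : (∀ n, X n), ∃ j, fj j x < δ :=
    fun x => ((hlim x).eventually_lt_const hδ).exists
  choose J hJ using hex
  obtain ⟨s, -, hs⟩ := hK.elim_nhds_subcover (fun x => {y | fj (J x) y < δ})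
    (fun x _ => ((isOpen_lt (hcont (J x)) continuous_const).mem_nhds (hJ x)))
  refine ⟨s.sup J, fun x hx => ?_⟩
  obtain ⟨y, hy, hxy⟩ := Set.mem_iUnion₂.1 (hs hx)
  exact lt_of_le_of_lt (hanti x (Finset.le_sup hy)) hxy

set_option maxHeartbeats 1000000 in
/-- Continuity from above of `φ` at bounded continuous `f` along decreasing continuous
perturbations `f_j ↓ 0`: one has `φ(f + f_j) ↓ φ(f)`. -/
theorem stmt1
    (φ : ((∀ n, X n) → ℝ) → ℝ) (φn : ∀ n, (X n → ℝ) → ℝ)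
    (hφn_nonneg : ∀ (n : ℕ) (g : X n → ℝ), Bbn g → 0 ≤ φn n g)
    (hmono : ∀ f g, Bb f → Bb g → (∀ x, f x ≤ g x) → φ f ≤ φ g)
    (hconv : ∀ f g, Bb f → Bb g → ∀ t : ℝ, 0 ≤ t → t ≤ 1 →
      φ (fun x => t * f x + (1 - t) * g x) ≤ t * φ f + (1 - t) * φ g)
    (htight : ∀ (n : ℕ) (m ε : ℝ), 0 < m → 0 < ε →
      ∃ K : Set (X n), IsCompact K ∧ φn n (Set.indicator Kᶜ fun _ => m) ≤ ε)
    (hdom : ∀ (f : (∀ n, X n) → ℝ) (g : ∀ n, X n → ℝ), Bb f → (∀ n, Bbn (g n)) →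
      (∀ x, (∑' n, ENNReal.ofReal (g n (x n))) = ⊤ ∨
        f x ≤ (∑' n, ENNReal.ofReal (g n (x n))).toReal) →
      Summable (fun n => φn n (g n)) → φ f ≤ ∑' n, φn n (g n))
    (f : (∀ n, X n) → ℝ) (hf : Cb f)
    (fj : ℕ → (∀ n, X n) → ℝ) (hfj : ∀ j, Cb (fj j))
    (hanti : ∀ x, Antitone fun j => fj j x)
    (hlim : ∀ x, Tendsto (fun j => fj j x) atTop (𝓝 0)) :
    Antitone (fun j => φ fun x => f x + fj j x) ∧
    Tendsto (fun j => φ fun x => f x + fj j x) atTop (𝓝 (φ f)) := by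
  obtain ⟨hf_cont, cf, hcf⟩ := hf
  have hBf : Bb f := ⟨hf_cont.measurable, cf, hcf⟩
  have hBfj : ∀ j, Bb (fj j) := fun j => ⟨(hfj j).1.measurable, (hfj j).2⟩
  have hBsum : ∀ j, Bb (fun x => f x + fj j x) := fun j => hBf.add' (hBfj j)
  have hfj_nonneg : ∀ j x, 0 ≤ fj j x := fun j x =>
    le_of_tendsto (hlim x) (eventually_atTop.2 ⟨j, fun k hk => hanti x hk⟩)
  have hAnti : Antitone (fun j => φ fun x => f x + fj j x) := fun i j hij =>
    hmono _ _ (hBsum j) (hBsum i) (fun x => add_le_add_right (hanti x hij) _)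
  have hlb : ∀ j, φ f ≤ φ (fun x => f x + fj j x) := fun j =>
    hmono _ _ hBf (hBsum j) (fun x => le_add_of_nonneg_right (hfj_nonneg j x))
  refine ⟨hAnti, ?_⟩
  -- bound for (fj j)
  obtain ⟨-, c0, hc0⟩ := hfj 0
  set m : ℝ := max c0 1 with hm_def
  have hm_pos : (0:ℝ) < m := lt_of_lt_of_le one_pos (le_max_right _ _)
  have hfjm : ∀ j x, fj j x ≤ m := fun j x =>
    (hanti x (Nat.zero_le j)).trans (((le_abs_self _).trans (hc0 x)).trans (le_max_left _ _))
  -- auxiliary Bb functions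
  have hBf1 : Bb (fun x => f x + 1) := hBf.add_const' 1
  have hB2f : Bb (fun x => 2 * f x) := hBf.const_mul' 2
  -- key estimate
  have key : ∀ ε : ℝ, 0 < ε → ∃ j₀, ∀ j, j₀ ≤ j →
      φ (fun x => f x + fj j x) ≤ φ f + ε := by
    intro ε hε
    set B : ℝ := φ (fun x => f x + 1) - φ f with hB_def
    have hB : 0 ≤ B := sub_nonneg.2 (hmono _ _ hBf hBf1 (fun x => by linarith))
    set C : ℝ := 1/2 + (1/2) * φ (fun x => 2 * f x) - φ f with hC_def
    set t : ℝ := min (1/2) (ε/(2*(|C|+1))) with ht_def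
    have ht0 : 0 < t := lt_min (by norm_num) (by positivity)
    have ht1 : t ≤ 1/2 := min_le_left _ _
    have htC : t * C ≤ ε/2 := by
      have h1 : t * C ≤ t * |C| := mul_le_mul_of_nonneg_left (le_abs_self C) ht0.le
      have h2 : t ≤ ε/(2*(|C|+1)) := min_le_right _ _
      have h3 : t * |C| ≤ (ε/(2*(|C|+1))) * |C| :=
        mul_le_mul_of_nonneg_right h2 (abs_nonneg C)
      have h4 : (ε/(2*(|C|+1))) * |C| ≤ ε/2 := by
        rw [div_mul_eq_mul_div, div_le_div_iff₀ (by positivity) (by norm_num)]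
        nlinarith [abs_nonneg C]
      exact le_trans h1 (le_trans h3 h4)
    set δ₂ : ℝ := min (1/2) (ε/(2*(B+1))) with hδ₂_def
    have hδ0 : 0 < δ₂ := lt_min (by norm_num) (by positivity)
    have hδ1 : δ₂ ≤ 1/2 := min_le_left _ _
    have hδB : δ₂ * B ≤ ε/2 := by
      have h2 : δ₂ ≤ ε/(2*(B+1)) := min_le_right _ _
      have h3 : δ₂ * B ≤ (ε/(2*(B+1))) * B := mul_le_mul_of_nonneg_right h2 hB
      have h4 : (ε/(2*(B+1))) * B ≤ ε/2 := by
        rw [div_mul_eq_mul_div, div_le_div_iff₀ (by positivity) (by norm_num)]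
        nlinarith
      exact le_trans h3 h4
    set m'' : ℝ := 2*m/t with hm''_def
    have hm''_pos : 0 < m'' := by positivity
    -- tightness
    have hKex : ∀ n, ∃ K : Set (X n), IsCompact K ∧
        φn n (Set.indicator Kᶜ fun _ => m'') ≤ (1/2:ℝ)^(n+1) :=
      fun n => htight n m'' _ hm''_pos (by positivity)
    choose Kn hKc hKφ using hKex
    set K : Set (∀ n, X n) := Set.pi Set.univ Kn with hK_def
    have hKcl : IsClosed K := isClosed_set_pi (fun n _ => (hKc n).isClosed)
    have hKcomp : IsCompact K := isCompact_univ_pi hKc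
    set w : (∀ n, X n) → ℝ := Set.indicator Kᶜ (fun _ => m'') with hw_def
    have hw_mem : ∀ x, x ∉ K → w x = m'' := fun x hx => Set.indicator_of_mem (Set.mem_compl hx) _
    have hw_nmem : ∀ x, x ∈ K → w x = 0 := fun x hx =>
      Set.indicator_of_notMem (Set.notMem_compl_iff.mpr hx) _
    have hw_nonneg : ∀ x, 0 ≤ w x := fun x =>
      Set.indicator_nonneg (fun _ _ => hm''_pos.le) x
    have hw_le : ∀ x, w x ≤ m'' := fun x =>
      Set.indicator_le' (fun _ _ => le_rfl) (fun _ _ => hm''_pos.le) x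
    have hBw : Bb w := by
      refine ⟨Measurable.indicator measurable_const hKcl.measurableSet.compl,
        m'', fun x => ?_⟩
      rw [abs_of_nonneg (hw_nonneg x)]; exact hw_le x
    set gn : ∀ n, X n → ℝ := fun n => Set.indicator (Kn n)ᶜ (fun _ => m'') with hgn_def
    have hBbn : ∀ n, Bbn (gn n) := fun n =>
      ⟨Measurable.indicator measurable_const (hKc n).isClosed.measurableSet.compl,
       fun x => Set.indicator_nonneg (fun _ _ => hm''_pos.le) x,
       m'', fun x => Set.indicator_le' (fun _ _ => le_rfl) (fun _ _ => hm''_pos.le) x⟩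
    have hsum_half : Summable (fun n : ℕ => (1/2:ℝ)^(n+1)) := by
      simpa [pow_succ] using summable_geometric_two.mul_right (1/2 : ℝ)
    have hsummable : Summable (fun n => φn n (gn n)) :=
      Summable.of_nonneg_of_le (fun n => hφn_nonneg n _ (hBbn n)) hKφ hsum_half
    have htsum_half : (∑' n : ℕ, (1/2:ℝ)^(n+1)) = 1 := by
      simp only [pow_succ]
      rw [tsum_mul_right, tsum_geometric_two]; norm_num
    have hφw : φ w ≤ 1 := by
      have hcond : ∀ x, (∑' n, ENNReal.ofReal (gn n (x n))) = ⊤ ∨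
          w x ≤ (∑' n, ENNReal.ofReal (gn n (x n))).toReal := by
        intro x
        by_cases hx : x ∈ K
        · right; rw [hw_nmem x hx]; exact ENNReal.toReal_nonneg
        · by_cases htop : (∑' n, ENNReal.ofReal (gn n (x n))) = ⊤
          · exact Or.inl htop
          · right
            obtain ⟨n₀, hn₀⟩ : ∃ n, x n ∉ Kn n := by
              by_contra h
              push_neg at h
              exact hx (fun n _ => h n)
            have hg : gn n₀ (x n₀) = m'' := Set.indicator_of_mem (Set.mem_compl hn₀) _
            have hle : ENNReal.ofReal m'' ≤ ∑' n, ENNReal.ofReal (gn n (x n)) := by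
              rw [← hg]; exact ENNReal.le_tsum n₀
            rw [hw_mem x hx]
            calc m'' = (ENNReal.ofReal m'').toReal := (ENNReal.toReal_ofReal hm''_pos.le).symm
              _ ≤ (∑' n, ENNReal.ofReal (gn n (x n))).toReal := ENNReal.toReal_mono htop hle
      calc φ w ≤ ∑' n, φn n (gn n) := hdom w gn hBw hBbn hcond hsummable
        _ ≤ ∑' n : ℕ, (1/2:ℝ)^(n+1) := Summable.tsum_le_tsum hKφ hsummable hsum_half
        _ = 1 := htsum_half
    -- Dini
    obtain ⟨j₀, hj₀⟩ := dini_aux hKcomp fj (fun j => (hfj j).1) hanti hlim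
      (show (0:ℝ) < δ₂/4 by positivity)
    refine ⟨j₀, fun j hj => ?_⟩
    -- pointwise domination
    have hpoint : ∀ x, f x + fj j x ≤
        (1 - t) * (δ₂ * (f x + 1) + (1 - δ₂) * f x)
          + (1 - (1 - t)) * ((1/2) * w x + (1 - (1/2)) * (2 * f x)) := by
      intro x
      by_cases hx : x ∈ K
      · have hw0 : w x = 0 := hw_nmem x hx
        have hfjx : fj j x < δ₂/4 := lt_of_le_of_lt (hanti x hj) (hj₀ x hx)
        rw [hw0]
        nlinarith [mul_nonneg (hδ0.le) (by linarith : (0:ℝ) ≤ 1/2 - t)]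
      · have hwm : w x = m'' := hw_mem x hx
        have hfjx : fj j x ≤ m := hfjm j x
        have hmm : t * m'' = 2 * m := by
          rw [hm''_def]; field_simp
        rw [hwm]
        nlinarith [mul_nonneg (by linarith : (0:ℝ) ≤ 1 - t) hδ0.le]
    -- Bb for intermediate functions
    have hBP : Bb (fun x => δ₂ * (f x + 1) + (1 - δ₂) * f x) :=
      ((hBf1.const_mul' δ₂).add' (hBf.const_mul' (1 - δ₂)))
    have hBQ : Bb (fun x => (1/2) * w x + (1 - (1/2)) * (2 * f x)) :=
      ((hBw.const_mul' (1/2)).add' (hB2f.const_mul' (1 - (1/2))))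
    have hBH : Bb (fun x => (1 - t) * (δ₂ * (f x + 1) + (1 - δ₂) * f x)
          + (1 - (1 - t)) * ((1/2) * w x + (1 - (1/2)) * (2 * f x))) :=
      ((hBP.const_mul' (1 - t)).add' (hBQ.const_mul' (1 - (1 - t))))
    have h1 : φ (fun x => f x + fj j x) ≤
        φ (fun x => (1 - t) * (δ₂ * (f x + 1) + (1 - δ₂) * f x)
          + (1 - (1 - t)) * ((1/2) * w x + (1 - (1/2)) * (2 * f x))) :=
      hmono _ _ (hBsum j) hBH hpoint
    have h2 : φ (fun x => (1 - t) * (δ₂ * (f x + 1) + (1 - δ₂) * f x)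
          + (1 - (1 - t)) * ((1/2) * w x + (1 - (1/2)) * (2 * f x))) ≤
        (1 - t) * φ (fun x => δ₂ * (f x + 1) + (1 - δ₂) * f x)
          + (1 - (1 - t)) * φ (fun x => (1/2) * w x + (1 - (1/2)) * (2 * f x)) :=
      hconv _ _ hBP hBQ (1 - t) (by linarith) (by linarith)
    have h3 : φ (fun x => δ₂ * (f x + 1) + (1 - δ₂) * f x) ≤
        δ₂ * φ (fun x => f x + 1) + (1 - δ₂) * φ f :=
      hconv _ _ hBf1 hBf δ₂ hδ0.le (by linarith)
    have h4 : φ (fun x => (1/2) * w x + (1 - (1/2)) * (2 * f x)) ≤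
        (1/2) * φ w + (1 - (1/2)) * φ (fun x => 2 * f x) :=
      hconv _ _ hBw hB2f (1/2) (by norm_num) (by norm_num)
    -- combine
    have hconv1 : (1 - t) * φ (fun x => δ₂ * (f x + 1) + (1 - δ₂) * f x) ≤
        (1 - t) * (δ₂ * φ (fun x => f x + 1) + (1 - δ₂) * φ f) :=
      mul_le_mul_of_nonneg_left h3 (by linarith)
    have hconv2 : (1 - (1 - t)) * φ (fun x => (1/2) * w x + (1 - (1/2)) * (2 * f x)) ≤
        (1 - (1 - t)) * ((1/2) * φ w + (1 - (1/2)) * φ (fun x => 2 * f x)) :=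
      mul_le_mul_of_nonneg_left h4 (by linarith)
    have hconv3 : (1 - (1 - t)) * ((1/2) * φ w + (1 - (1/2)) * φ (fun x => 2 * f x)) ≤
        (1 - (1 - t)) * ((1/2) * 1 + (1 - (1/2)) * φ (fun x => 2 * f x)) := by
      have : (1/2) * φ w + (1 - (1/2)) * φ (fun x => 2 * f x) ≤
          (1/2) * 1 + (1 - (1/2)) * φ (fun x => 2 * f x) := by linarith
      exact mul_le_mul_of_nonneg_left this (by linarith)
    have hfinal : (1 - t) * (δ₂ * φ (fun x => f x + 1) + (1 - δ₂) * φ f)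
          + (1 - (1 - t)) * ((1/2) * 1 + (1 - (1/2)) * φ (fun x => 2 * f x)) ≤
        φ f + ε := by
      have hexp : (1 - t) * (δ₂ * φ (fun x => f x + 1) + (1 - δ₂) * φ f)
            + (1 - (1 - t)) * ((1/2) * 1 + (1 - (1/2)) * φ (fun x => 2 * f x))
          = φ f + (1 - t) * δ₂ * B + t * C := by
        rw [hB_def, hC_def]; ring
      rw [hexp]
      clear_value B C t δ₂
      have hnn : 0 ≤ t * (δ₂ * B) := mul_nonneg ht0.le (mul_nonneg hδ0.le hB)
      have e1 : (1 - t) * δ₂ * B ≤ δ₂ * B := by nlinarith [hnn]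
      linarith [e1, htC, hδB]
    linarith
  -- conclude the limit
  rw [Metric.tendsto_atTop]
  intro ε hε
  obtain ⟨j₀, hj₀⟩ := key (ε/2) (by positivity)
  refine ⟨j₀, fun j hj => ?_⟩
  rw [Real.dist_eq, abs_of_nonneg (by linarith [hlb j])]
  linarith [hj₀ j hj, hlb j]
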